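/- Median characterization for absolute value loss: for ℓ(x,c) = |x − c| with right derivative ℓ'(x,c) = 1_{x ≤ c} − 1_{x > c}, the function λ(c) := E[d(F_X(X)) ℓ'(X,c)] equals 2 D(F_X(c)) − 1; thus a root c of λ satisfies D(F_X(c)) = 1/2, i.e. c is a median of X_D, and equivalently F_X(c) equals the median of the distribution D. -/

import Mathlib

open MeasureTheory Set Filter ProbabilityTheory
open scoped Topology

set_option linter.unnecessarySeqFocus false

open MeasureTheory Set Filter ProbabilityTheory
open scoped Topology

lemma my_cdf_continuous (μ : Measure ℝ) [IsProbabilityMeasure μ] [NullSingletonClass μ] :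
    Continuous (cdf μ) := by
  rw [continuous_iff_continuousAt]
  intro x
  rw [(cdf μ).mono.continuousAt_iff_leftLim_eq_rightLim, (cdf μ).rightLim_eq]
  have h1 : (cdf μ).measure {x} = 0 := by rw [measure_cdf]; exact measure_singleton x
  rw [StieltjesFunction.measure_singleton] at h1
  have h2 : cdf μ x - Function.leftLim (cdf μ) x ≤ 0 := by
    simpa [ENNReal.ofReal_eq_zero] using h1
  have h3 := (cdf μ).mono.leftLim_le (le_refl x)
  linarith

lemma my_cdf_level (μ : Measure ℝ) [IsProbabilityMeasure μ] [NullSingletonClass μ]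
    {t : ℝ} (h0 : 0 ≤ t) (h1 : t < 1) :
    μ {x | cdf μ x ≤ t} = ENNReal.ofReal t := by
  set s : Set ℝ := {x | cdf μ x ≤ t} with hs
  rcases eq_empty_or_nonempty s with he | hne
  · have ht : t = 0 := by
      by_contra h
      have htpos : 0 < t := lt_of_le_of_ne h0 (Ne.symm h)
      have := (tendsto_cdf_atBot μ).eventually_lt_const htpos
      rcases this.exists with ⟨x, hx⟩
      have hxs : x ∈ s := hx.le
      rw [he] at hxs
      exact hxs
    simp [he, ht]
  · have hclosed : IsClosed s := isClosed_Iic.preimage (my_cdf_continuous μ)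
    have hbdd : BddAbove s := by
      have := (tendsto_cdf_atTop μ).eventually_const_lt h1
      rcases (this.and (eventually_ge_atTop (0:ℝ))).exists with ⟨b, hb, _⟩
      exact ⟨b, fun x hx => by
        by_contra hxb
        exact absurd (((cdf μ).mono (le_of_not_ge hxb)).trans hx) (not_le.2 hb)⟩
    have ha : sSup s ∈ s := hclosed.csSup_mem hne hbdd
    set a := sSup s with hadef
    have hseq : s = Iic a := by
      apply Subset.antisymm
      · exact fun x hx => le_csSup hbdd hx
      · exact fun x hx => le_trans ((cdf μ).mono hx) ha
    have hat : cdf μ a = t := by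
      refine le_antisymm ha ?_
      by_contra hlt
      push_neg at hlt
      have := (tendsto_cdf_atTop μ).eventually_const_lt h1
      rcases (this.and (eventually_ge_atTop a)).exists with ⟨b, hb, hab⟩
      have : t ∈ Icc (cdf μ a) (cdf μ b) := ⟨hlt.le, hb.le⟩
      rcases intermediate_value_Icc hab ((my_cdf_continuous μ).continuousOn) this
        with ⟨c, hc, hct⟩
      have hcs : c ∈ s := by simp [hs, hct]
      have : c ≤ a := le_csSup hbdd hcs
      have : cdf μ c ≤ cdf μ a := (cdf μ).mono this
      rw [hct] at this
      linarith
    rw [hseq, ← ofReal_cdf μ a, hat]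

lemma my_cdf_map (μ : Measure ℝ) [IsProbabilityMeasure μ] [NullSingletonClass μ] :
    μ.map (cdf μ) = MeasureTheory.volume.restrict (Icc (0:ℝ) 1) := by
  have hmeas : Measurable (cdf μ) := (my_cdf_continuous μ).measurable
  refine Measure.ext_of_Iic _ _ (fun t => ?_)
  rw [Measure.map_apply hmeas measurableSet_Iic,
    Measure.restrict_apply measurableSet_Iic]
  rcases lt_or_ge t 0 with h | h0
  · have h1 : (cdf μ) ⁻¹' Iic t = ∅ := by
      ext x; simp only [mem_preimage, mem_Iic, mem_empty_iff_false, iff_false, not_le]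
      exact h.trans_le (cdf_nonneg μ x)
    have h2 : Iic t ∩ Icc (0:ℝ) 1 = ∅ := by
      ext x; simp only [mem_inter_iff, mem_Iic, mem_Icc, mem_empty_iff_false, iff_false]
      rintro ⟨hx, hx0, _⟩; linarith
    simp [h1, h2]
  · rcases lt_or_ge t 1 with h1 | h1
    · have h2 : Iic t ∩ Icc (0:ℝ) 1 = Icc 0 t := by
        ext x; simp only [mem_inter_iff, mem_Iic, mem_Icc]
        constructor
        · rintro ⟨hx, hx0, _⟩; exact ⟨hx0, hx⟩
        · rintro ⟨hx0, hx⟩; exact ⟨hx, hx0, hx.trans h1.le⟩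
      rw [h2, Real.volume_Icc]
      have : (cdf μ) ⁻¹' Iic t = {x | cdf μ x ≤ t} := rfl
      rw [this, my_cdf_level μ h0 h1, sub_zero]
    · have h2 : Iic t ∩ Icc (0:ℝ) 1 = Icc 0 1 := by
        ext x; simp only [mem_inter_iff, mem_Iic, mem_Icc]
        constructor
        · rintro ⟨_, hx0, hx1⟩; exact ⟨hx0, hx1⟩
        · rintro ⟨hx0, hx1⟩; exact ⟨hx1.trans h1, hx0, hx1⟩
      have h3 : (cdf μ) ⁻¹' Iic t = univ := by
        ext x; simp only [mem_preimage, mem_Iic, mem_univ, iff_true]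
        exact (cdf_le_one μ x).trans h1
      rw [h2, h3, Real.volume_Icc, measure_univ]
      norm_num

/-- median characterization for absolute value loss: for
`ℓ(x,c) = |x − c|` with right derivative `ℓ'(x,c) = 1_{x ≤ c} − 1_{x > c}`,
the function `λ(c) = E[d(F_X(X)) ℓ'(X,c)]` equals `2 D(F_X(c)) − 1`; hence a root
`c` of `λ` satisfies `D(F_X(c)) = 1/2`, i.e. `c` is a median of `X_D`, equivalently
`F_X(c)` is the median of the distribution `D`. -/
theorem stmt16 (μ : Measure ℝ) [IsProbabilityMeasure μ]
    (F D d f : ℝ → ℝ)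
    (hf : μ = MeasureTheory.volume.withDensity (fun x => ENNReal.ofReal (f x)))
    (hF : ∀ x, F x = (μ (Iic x)).toReal)
    (hDdens : ∀ t ∈ Icc (0:ℝ) 1, D t = ∫ s in Icc (0:ℝ) t, d s)
    (hD1 : D 1 = 1) :
    (∀ c : ℝ, ∫ x, d (F x) *
        ((if x ≤ c then (1:ℝ) else 0) - (if x ≤ c then (0:ℝ) else 1)) ∂μ
      = 2 * D (F c) - 1)
    ∧ ∀ c : ℝ,
        (∫ x, d (F x) *
          ((if x ≤ c then (1:ℝ) else 0) - (if x ≤ c then (0:ℝ) else 1)) ∂μ) = 0 →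
        D (F c) = 1/2 := by
  haveI hna : NullSingletonClass μ := by
    constructor
    intro a
    rw [hf]
    exact (withDensity_absolutelyContinuous MeasureTheory.volume _)
      (measure_singleton a)
  have hFG : F = ⇑(cdf μ) := funext fun x => (hF x).trans (cdf_eq_real μ x).symm
  set G : ℝ → ℝ := ⇑(cdf μ) with hG
  have hGmeas : Measurable G := (my_cdf_continuous μ).measurable
  have hmap : μ.map G = MeasureTheory.volume.restrict (Icc (0:ℝ) 1) := my_cdf_map μ
  -- d is integrable on [0,1]
  have hd_int : IntegrableOn d (Icc (0:ℝ) 1) MeasureTheory.volume := by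
    by_contra h
    rw [hDdens 1 ⟨zero_le_one, le_refl 1⟩, integral_undef h] at hD1
    exact one_ne_zero hD1.symm
  have hd_map : Integrable d (μ.map G) := by rw [hmap]; exact hd_int
  have hcomp_int : Integrable (fun x => d (G x)) μ :=
    (integrable_map_measure hd_map.aestronglyMeasurable hGmeas.aemeasurable).mp hd_map
  have htotal : ∫ x, d (G x) ∂μ = 1 := by
    have := integral_map (φ := G) hGmeas.aemeasurable hd_map.aestronglyMeasurable
    rw [hmap] at this
    rw [← this, ← hDdens 1 ⟨zero_le_one, le_refl 1⟩, hD1]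
  have main : ∀ c : ℝ, ∫ x, d (G x) *
      ((if x ≤ c then (1:ℝ) else 0) - (if x ≤ c then (0:ℝ) else 1)) ∂μ
      = 2 * D (G c) - 1 := by
    intro c
    have hGc0 : 0 ≤ G c := cdf_nonneg μ c
    have hGc1 : G c ≤ 1 := cdf_le_one μ c
    -- null set where indicators differ
    have hnull : μ ({x | G x ≤ G c} \ Iic c) = 0 := by
      rcases lt_or_ge (G c) 1 with h1 | h1
      · have hIic : μ (Iic c) = ENNReal.ofReal (G c) := (ofReal_cdf μ c).symm
        have hsub : Iic c ⊆ {x | G x ≤ G c} := fun x hx => (cdf μ).mono hx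
        have hmeasle : MeasurableSet {x | G x ≤ G c} :=
          measurableSet_le hGmeas measurable_const
        rw [measure_diff hsub measurableSet_Iic.nullMeasurableSet
          (measure_ne_top μ _), my_cdf_level μ hGc0 h1, hIic, tsub_self]
      · have h2 : μ (Iic c)ᶜ = 0 := by
          rw [measure_compl measurableSet_Iic (measure_ne_top μ _),
            ← ofReal_cdf μ c]
          have hGc : cdf μ c = 1 := le_antisymm hGc1 h1
          rw [hGc]
          simp
        exact measure_mono_null (fun x hx => hx.2) h2
    -- a.e. equality of indicator functions
    have hae : (fun x => (Iic c).indicator (fun y => d (G y)) x)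
        =ᵐ[μ] (fun x => (Iic (G c)).indicator d (G x)) := by
      refine measure_mono_null (fun x hx => ?_) hnull
      simp only [mem_setOf_eq] at hx ⊢
      by_cases hxc : x ≤ c
      · exfalso
        apply hx
        have hGle : G x ≤ G c := (cdf μ).mono hxc
        simp [indicator, hxc, mem_Iic, hGle]
      · by_cases hGle : G x ≤ G c
        · exact ⟨hGle, fun h => hxc (mem_Iic.mp h)⟩
        · exfalso
          apply hx
          simp [indicator, hxc, mem_Iic, hGle]
    have hind_meas : AEStronglyMeasurable ((Iic (G c)).indicator d) (μ.map G) :=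
      hd_map.aestronglyMeasurable.indicator measurableSet_Iic
    have hpart : ∫ x in Iic c, d (G x) ∂μ = D (G c) := by
      rw [← integral_indicator measurableSet_Iic, integral_congr_ae hae]
      have hmapint := integral_map (φ := G) hGmeas.aemeasurable hind_meas
      rw [hmap] at hmapint
      rw [← hmapint, integral_indicator measurableSet_Iic,
        Measure.restrict_restrict measurableSet_Iic]
      have hset : Iic (G c) ∩ Icc (0:ℝ) 1 = Icc 0 (G c) := by
        ext x; simp only [mem_inter_iff, mem_Iic, mem_Icc]
        constructor
        · rintro ⟨hx, hx0, _⟩; exact ⟨hx0, hx⟩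
        · rintro ⟨hx0, hx⟩; exact ⟨hx, hx0, hx.trans hGc1⟩
      rw [hset, ← hDdens (G c) ⟨hGc0, hGc1⟩]
    have heq : (fun x => d (G x) *
        ((if x ≤ c then (1:ℝ) else 0) - (if x ≤ c then (0:ℝ) else 1)))
        = fun x => 2 * (Iic c).indicator (fun y => d (G y)) x - d (G x) := by
      funext x
      by_cases hxc : x ≤ c <;> simp [indicator, hxc, mem_Iic] <;> ring
    rw [heq, integral_sub ((hcomp_int.indicator measurableSet_Iic).const_mul 2)
      hcomp_int, integral_const_mul, integral_indicator measurableSet_Iic,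
      hpart, htotal]
  rw [hFG]
  refine ⟨main, fun c hc => ?_⟩
  rw [main c] at hc
  linarith
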